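/- Under the setup of the profile-likelihood lemma, the Gaussian log-likelihood at (Λ̂, Ψ) equals −(n/2){p log(2π) + log det Ψ + Tr(Ψ⁻¹S) + Σ_{i=1}^q (log θ_i − θ_i + 1)}, where Λ̂ = Ψ^{1/2} V_q Δ, θ_i are the top q eigenvalues of Ψ^{-1/2}SΨ^{-1/2} (each assumed > 1), and Δ = diag((θ_i−1)^{1/2}). -/

import Mathlib

open Matrix Real

private lemma sum_castLE {p q : ℕ} (hqp : q ≤ p) (g : Fin p → ℝ) :
    ∑ i : Fin q, g (Fin.castLE hqp i) = ∑ i : Fin p, if (i : ℕ) < q then g i else 0 := by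
  classical
  have h1 : ∑ i : Fin p, (if (i : ℕ) < q then g i else 0)
      = ∑ i ∈ Finset.univ.filter (fun i : Fin p => (i : ℕ) < q), g i :=
    (Finset.sum_filter _ _).symm
  have h2 : Finset.univ.filter (fun i : Fin p => (i : ℕ) < q)
      = Finset.univ.map ⟨Fin.castLE hqp, Fin.castLE_injective hqp⟩ := by
    ext x
    simp only [Finset.mem_filter, Finset.mem_univ, true_and, Finset.mem_map,
      Function.Embedding.coeFn_mk]
    constructor
    · intro hx
      exact ⟨⟨x, hx⟩, rfl⟩
    · rintro ⟨y, -, rfl⟩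
      simpa using y.isLt
  rw [h1, h2, Finset.sum_map]
  rfl

private lemma submatrix_conj {p q : ℕ} (hqp : q ≤ p) (V : Matrix (Fin p) (Fin p) ℝ)
    (c : Fin p → ℝ) (d : Fin q → ℝ) (hd : ∀ j, d j = c (Fin.castLE hqp j)) :
    V.submatrix id (Fin.castLE hqp) * Matrix.diagonal d *
      (V.submatrix id (Fin.castLE hqp))ᵀ
    = V * Matrix.diagonal (fun i : Fin p => if (i : ℕ) < q then c i else 0) * Vᵀ := by
  ext a b
  simp only [Matrix.mul_apply, Matrix.transpose_apply, Matrix.submatrix_apply, id_eq,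
    Matrix.diagonal_apply, mul_ite, ite_mul, mul_zero, zero_mul, Finset.sum_ite_eq,
    Finset.sum_ite_eq', Finset.mem_univ, if_true]
  rw [← sum_castLE hqp (fun i : Fin p => V a i * c i * V b i)]
  exact Finset.sum_congr rfl fun j _ => by rw [hd j]

theorem stmt_8 (n p q : ℕ) (hn : 0 < n) (hp : 0 < p) (hq : 0 < q) (hqp : q ≤ p)
    (S : Matrix (Fin p) (Fin p) ℝ) (hS : S.PosSemidef)
    (ψ : Fin p → ℝ) (hψ : ∀ i, 0 < ψ i)
    (V : Matrix (Fin p) (Fin p) ℝ) (hV : Vᵀ * V = 1)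
    (θ : Fin p → ℝ) (hdec : Antitone θ)
    (heig : (Matrix.diagonal fun i => (Real.sqrt (ψ i))⁻¹) * S *
        (Matrix.diagonal fun i => (Real.sqrt (ψ i))⁻¹) = V * Matrix.diagonal θ * Vᵀ)
    (hθ : ∀ i : Fin p, (i : ℕ) < q → 1 < θ i) :
    let Vq : Matrix (Fin p) (Fin q) ℝ := V.submatrix id (Fin.castLE hqp)
    let Δ : Matrix (Fin q) (Fin q) ℝ :=
      Matrix.diagonal fun i => Real.sqrt (θ (Fin.castLE hqp i) - 1)
    let Λhat : Matrix (Fin p) (Fin q) ℝ :=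
      Matrix.diagonal (fun i => Real.sqrt (ψ i)) * Vq * Δ
    let Sig : Matrix (Fin p) (Fin p) ℝ := Λhat * Λhatᵀ + Matrix.diagonal ψ
    (-((n : ℝ) / 2) * (p * Real.log (2 * Real.pi) + Real.log Sig.det + (Sig⁻¹ * S).trace))
      = -((n : ℝ) / 2) * (p * Real.log (2 * Real.pi)
          + Real.log (Matrix.diagonal ψ).det + ((Matrix.diagonal ψ)⁻¹ * S).trace
          + ∑ i : Fin q, (Real.log (θ (Fin.castLE hqp i)) - θ (Fin.castLE hqp i) + 1)) := by
  intro Vq Δ Λhat Sig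
  have hψ0 : ∀ i, ψ i ≠ 0 := fun i => (hψ i).ne'
  have hs0 : ∀ i, Real.sqrt (ψ i) ≠ 0 := fun i => (Real.sqrt_pos.mpr (hψ i)).ne'
  set D : Matrix (Fin p) (Fin p) ℝ := Matrix.diagonal (fun i => Real.sqrt (ψ i)) with hD
  set Dinv : Matrix (Fin p) (Fin p) ℝ :=
    Matrix.diagonal (fun i => (Real.sqrt (ψ i))⁻¹) with hDinv
  set m : Fin p → ℝ := fun i => if (i : ℕ) < q then θ i else 1 with hm
  have hmpos : ∀ i, 0 < m i := by
    intro i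
    by_cases h : (i : ℕ) < q
    · simp only [hm, if_pos h]; linarith [hθ i h]
    · simp only [hm, if_neg h]; norm_num
  have hm0 : ∀ i, m i ≠ 0 := fun i => (hmpos i).ne'
  -- basic cancellation facts
  have hVV' : V * Vᵀ = 1 := mul_eq_one_comm.mp hV
  have cancel : ∀ (A B : Matrix (Fin p) (Fin p) ℝ), A * B = 1 →
      ∀ X : Matrix (Fin p) (Fin p) ℝ, A * (B * X) = X := by
    intro A B h X
    rw [← Matrix.mul_assoc, h, Matrix.one_mul]
  have hDDinv : D * Dinv = 1 := by
    rw [hD, hDinv, Matrix.diagonal_mul_diagonal]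
    rw [show (fun i => Real.sqrt (ψ i) * (Real.sqrt (ψ i))⁻¹) = fun _ => (1 : ℝ) from
      funext fun i => mul_inv_cancel₀ (hs0 i), Matrix.diagonal_one]
  have hDinvD : Dinv * D = 1 := mul_eq_one_comm.mp hDDinv
  have hmm : Matrix.diagonal m * Matrix.diagonal (fun i => (m i)⁻¹) = 1 := by
    rw [Matrix.diagonal_mul_diagonal]
    rw [show (fun i => m i * (m i)⁻¹) = fun _ => (1 : ℝ) from
      funext fun i => mul_inv_cancel₀ (hm0 i), Matrix.diagonal_one]
  have cVV : ∀ X, Vᵀ * (V * X) = X := cancel _ _ hV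
  have cVV' : ∀ X, V * (Vᵀ * X) = X := cancel _ _ hVV'
  have cDD : ∀ X, D * (Dinv * X) = X := cancel _ _ hDDinv
  have cDD' : ∀ X, Dinv * (D * X) = X := cancel _ _ hDinvD
  have cmm : ∀ X, Matrix.diagonal m * (Matrix.diagonal (fun i => (m i)⁻¹) * X) = X :=
    cancel _ _ hmm
  -- Sig as a conjugation
  have hΛΛ : Λhat * Λhatᵀ =
      D * (V * Matrix.diagonal (fun i : Fin p => if (i : ℕ) < q then θ i - 1 else 0) * Vᵀ)
        * D := by
    have h1 : Λhat = D * V.submatrix id (Fin.castLE hqp) *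
        Matrix.diagonal (fun j => Real.sqrt (θ (Fin.castLE hqp j) - 1)) := rfl
    have hΔΔ : Matrix.diagonal (fun j => Real.sqrt (θ (Fin.castLE hqp j) - 1)) *
        Matrix.diagonal (fun j => Real.sqrt (θ (Fin.castLE hqp j) - 1)) =
        Matrix.diagonal (fun j : Fin q => θ (Fin.castLE hqp j) - 1) := by
      rw [Matrix.diagonal_mul_diagonal]
      exact congrArg Matrix.diagonal (funext fun j =>
        Real.mul_self_sqrt (by linarith [hθ (Fin.castLE hqp j) (by simpa using j.isLt)]))
    calc Λhat * Λhatᵀ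
        = D * (V.submatrix id (Fin.castLE hqp) *
            Matrix.diagonal (fun j : Fin q => θ (Fin.castLE hqp j) - 1) *
            (V.submatrix id (Fin.castLE hqp))ᵀ) * D := by
          rw [h1]
          simp only [Matrix.transpose_mul, Matrix.diagonal_transpose, hD]
          simp only [Matrix.mul_assoc, ← hΔΔ]
      _ = D * (V * Matrix.diagonal (fun i : Fin p => if (i : ℕ) < q then θ i - 1 else 0)
            * Vᵀ) * D := by
          rw [submatrix_conj hqp V (fun i => θ i - 1)
            (fun j : Fin q => θ (Fin.castLE hqp j) - 1) (fun j => rfl)]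
  have hSig2 : Sig = D * (V * Matrix.diagonal m * Vᵀ) * D := by
    have hdm : Matrix.diagonal m =
        Matrix.diagonal (fun i : Fin p => if (i : ℕ) < q then θ i - 1 else 0) + 1 := by
      rw [← Matrix.diagonal_one, Matrix.diagonal_add]
      refine congrArg Matrix.diagonal (funext fun i => ?_)
      by_cases h : (i : ℕ) < q <;> simp [hm, h]
    have hψD : Matrix.diagonal ψ = D * (V * Vᵀ) * D := by
      rw [hVV', Matrix.mul_one, hD, Matrix.diagonal_mul_diagonal]
      exact congrArg Matrix.diagonal (funext fun i => (Real.mul_self_sqrt (hψ i).le).symm)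
    show Λhat * Λhatᵀ + Matrix.diagonal ψ = _
    rw [hΛΛ, hψD, hdm, Matrix.mul_add, Matrix.mul_one, Matrix.add_mul, Matrix.mul_add,
      Matrix.add_mul]
  -- determinant
  have hdetV : V.det * V.det = 1 := by
    have := congrArg Matrix.det hVV'
    simpa [Matrix.det_mul, Matrix.det_transpose, Matrix.det_one] using this
  have hprodsq : (∏ i, Real.sqrt (ψ i)) * (∏ i, Real.sqrt (ψ i)) = ∏ i, ψ i := by
    rw [← Finset.prod_mul_distrib]
    exact Finset.prod_congr rfl fun i _ => Real.mul_self_sqrt (hψ i).le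
  have hdet : Sig.det = (∏ i, ψ i) * ∏ i, m i := by
    rw [hSig2, Matrix.det_mul, Matrix.det_mul, Matrix.det_mul, Matrix.det_mul, hD,
      Matrix.det_diagonal, Matrix.det_diagonal, Matrix.det_transpose]
    calc (∏ i, Real.sqrt (ψ i)) * (V.det * (∏ i, m i) * V.det) * (∏ i, Real.sqrt (ψ i))
        = ((∏ i, Real.sqrt (ψ i)) * (∏ i, Real.sqrt (ψ i))) * ((V.det * V.det) *
          ∏ i, m i) := by ring
      _ = (∏ i, ψ i) * ∏ i, m i := by rw [hprodsq, hdetV, one_mul]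
  have hlogdet : Real.log Sig.det = (∑ i, Real.log (ψ i)) + ∑ i, Real.log (m i) := by
    rw [hdet, Real.log_mul (Finset.prod_ne_zero_iff.mpr fun i _ => hψ0 i)
      (Finset.prod_ne_zero_iff.mpr fun i _ => hm0 i),
      Real.log_prod (fun i _ => hψ0 i), Real.log_prod (fun i _ => hm0 i)]
  -- inverse of Sig
  have hSigW : Sig * (Dinv * (V * Matrix.diagonal (fun i => (m i)⁻¹) * Vᵀ) * Dinv) = 1 := by
    rw [hSig2]
    simp only [Matrix.mul_assoc]
    simp only [cDD, cVV, cVV', cmm, hDDinv]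
  have hSinv : Sig⁻¹ = Dinv * (V * Matrix.diagonal (fun i => (m i)⁻¹) * Vᵀ) * Dinv :=
    Matrix.inv_eq_right_inv hSigW
  -- S as a conjugation
  have hSdiag : S = D * (V * Matrix.diagonal θ * Vᵀ) * D := by
    have h2 : D * (Dinv * S * Dinv) * D = S := by
      simp only [Matrix.mul_assoc, cDD, hDinvD, Matrix.mul_one]
    rw [← h2, heig]
  -- trace helper
  have htr : ∀ c : Fin p → ℝ, (Dinv * (V * Matrix.diagonal c * Vᵀ) * D).trace = ∑ i, c i := by
    intro c
    rw [Matrix.trace_mul_comm, cDD, Matrix.trace_mul_comm, cVV, Matrix.trace_diagonal]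
  have htr1 : (Sig⁻¹ * S).trace = ∑ i, (m i)⁻¹ * θ i := by
    have hWS : (Dinv * (V * Matrix.diagonal (fun i => (m i)⁻¹) * Vᵀ) * Dinv) *
        (D * (V * Matrix.diagonal θ * Vᵀ) * D) =
        Dinv * (V * Matrix.diagonal (fun i => (m i)⁻¹ * θ i) * Vᵀ) * D := by
      have cdd : ∀ X : Matrix (Fin p) (Fin p) ℝ,
          Matrix.diagonal (fun i => (m i)⁻¹) * (Matrix.diagonal θ * X) =
          Matrix.diagonal (fun i => (m i)⁻¹ * θ i) * X := by
        intro X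
        rw [← Matrix.mul_assoc, Matrix.diagonal_mul_diagonal]
      simp only [Matrix.mul_assoc]
      simp only [cDD', cVV, cdd]
    rw [hSinv, hSdiag, hWS, htr]
  have htr2 : ((Matrix.diagonal ψ)⁻¹ * S).trace = ∑ i, θ i := by
    have hinvψ : (Matrix.diagonal ψ)⁻¹ = Matrix.diagonal (fun i => (ψ i)⁻¹) := by
      refine Matrix.inv_eq_right_inv ?_
      rw [Matrix.diagonal_mul_diagonal]
      rw [show (fun i => ψ i * (ψ i)⁻¹) = fun _ => (1 : ℝ) from
        funext fun i => mul_inv_cancel₀ (hψ0 i), Matrix.diagonal_one]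
    have hcomb : Matrix.diagonal (fun i => (ψ i)⁻¹) * D = Dinv := by
      rw [hD, hDinv, Matrix.diagonal_mul_diagonal]
      refine congrArg Matrix.diagonal (funext fun i => ?_)
      refine (inv_eq_of_mul_eq_one_right ?_).symm
      rw [mul_comm ((ψ i)⁻¹) (Real.sqrt (ψ i)), ← mul_assoc,
        Real.mul_self_sqrt (hψ i).le, mul_inv_cancel₀ (hψ0 i)]
    rw [hinvψ, hSdiag, ← Matrix.mul_assoc, ← Matrix.mul_assoc, hcomb]
    exact htr θ
  -- put it together
  have hlogψ : Real.log (Matrix.diagonal ψ).det = ∑ i, Real.log (ψ i) := by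
    rw [Matrix.det_diagonal, Real.log_prod (fun i _ => hψ0 i)]
  have hsumq : ∑ i : Fin q, (Real.log (θ (Fin.castLE hqp i)) - θ (Fin.castLE hqp i) + 1)
      = ∑ i : Fin p, if (i : ℕ) < q then Real.log (θ i) - θ i + 1 else 0 :=
    sum_castLE hqp (fun i => Real.log (θ i) - θ i + 1)
  have hkey : (∑ i, Real.log (m i)) + (∑ i, (m i)⁻¹ * θ i)
      = (∑ i, θ i) + ∑ i : Fin p, (if (i : ℕ) < q then Real.log (θ i) - θ i + 1 else 0) := by
    rw [← Finset.sum_add_distrib, ← Finset.sum_add_distrib]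
    refine Finset.sum_congr rfl fun i _ => ?_
    by_cases h : (i : ℕ) < q
    · have hθi : θ i ≠ 0 := by linarith [hθ i h]
      simp only [hm, if_pos h, inv_mul_cancel₀ hθi]
      ring
    · simp only [hm, if_neg h]
      simp
  rw [hlogdet, htr1, htr2, hlogψ, hsumq]
  have hfin : (∑ i, Real.log (ψ i) + ∑ i, Real.log (m i)) + ∑ i, (m i)⁻¹ * θ i
      = ∑ i, Real.log (ψ i) + ∑ i, θ i +
        ∑ i : Fin p, (if (i : ℕ) < q then Real.log (θ i) - θ i + 1 else 0) := by
    linarith [hkey]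
  congr 1
  linarith [hfin]
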